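/- With notation as in the Voronoi tiling construction: if φ(T^n x) > 1/2 fails, i.e. φ(T^n x) ≤ 1/2, and the covering condition X = ⋃_{|k|<M₁} T^k F holds with φ = 1 on F and H = (M₁+1)², then W(x,n) = π₁(V(x,n) ∩ (ℝ × {−H})) is empty. Equivalently: W(x,n) ≠ ∅ implies φ(T^n x) > 1/2. -/
import Mathlib


noncomputable section

/-- The point `(a, b)` of the Euclidean plane. -/
def v2 (a b : ℝ) : EuclideanSpace ℝ (Fin 2) :=
  (WithLp.equiv 2 (Fin 2 → ℝ)).symm ![a, b]

/-- The generating point `(n, 1/φ(Tⁿx))` of the Voronoi diagram. -/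
def vpt {X : Type*} (T : Equiv.Perm X) (φ : X → ℝ) (x : X) (n : ℤ) :
    EuclideanSpace ℝ (Fin 2) :=
  v2 (n : ℝ) (1 / φ ((T ^ n) x))

/-- The Voronoi cell `V(x,n)` of the point `(n, 1/φ(Tⁿx))` relative to the discrete set
`S(x) = {(m, 1/φ(Tᵐx)) : φ(Tᵐx) > 0}`. -/
def Vcell {X : Type*} (T : Equiv.Perm X) (φ : X → ℝ) (x : X) (n : ℤ) :
    Set (EuclideanSpace ℝ (Fin 2)) :=
  {u | ∀ m : ℤ, 0 < φ ((T ^ m) x) → dist u (vpt T φ x n) ≤ dist u (vpt T φ x m)}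

/-- The tile `W(x,n) = π₁(V(x,n) ∩ (ℝ × {−H}))` (empty when `φ(Tⁿx) = 0`). -/
def Wtile {X : Type*} (T : Equiv.Perm X) (φ : X → ℝ) (x : X) (H : ℝ) (n : ℤ) :
    Set ℝ :=
  {t | 0 < φ ((T ^ n) x) ∧ v2 t (-H) ∈ Vcell T φ x n}

lemma dist_v2 (a b c d : ℝ) :
    dist (v2 a b) (v2 c d) = Real.sqrt ((a - c) ^ 2 + (b - d) ^ 2) := by
  simp [v2, EuclideanSpace.dist_eq, Fin.sum_univ_two, Real.dist_eq, sq_abs]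

/-- under the covering condition (every `j ∈ ℤ` is within `M₁` of some
`k` with `φ(Tᵏx) = 1`), if `φ(Tⁿx) ≤ 1/2` then the tile `W(x,n)` at height
`H = (M₁+1)²` is empty; equivalently `W(x,n) ≠ ∅` forces `φ(Tⁿx) > 1/2`. -/
theorem stmt15 {X : Type*} (T : Equiv.Perm X) (φ : X → ℝ)
    (hφ : ∀ y, φ y ∈ Set.Icc (0 : ℝ) 1) (x : X) (M₁ : ℕ)
    (hcov : ∀ j : ℤ, ∃ k : ℤ, |k - j| < (M₁ : ℤ) ∧ φ ((T ^ k) x) = 1)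
    (n : ℤ) (hn : φ ((T ^ n) x) ≤ 1 / 2) :
    Wtile T φ x (((M₁ : ℝ) + 1) ^ 2) n = ∅ := by
  ext t
  simp only [Wtile, Set.mem_setOf_eq, Set.mem_empty_iff_false, iff_false, not_and]
  intro hpos hcell
  obtain ⟨k, hk, hk1⟩ := hcov ⌊t⌋
  have hkpos : (0:ℝ) < φ ((T ^ k) x) := by rw [hk1]; norm_num
  have hle := hcell k hkpos
  set h : ℝ := 1 / φ ((T ^ n) x) with hh_def
  have hh : (2:ℝ) ≤ h := by
    rw [hh_def, le_div_iff₀ hpos]; linarith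
  set H : ℝ := ((M₁ : ℝ) + 1) ^ 2 with hH_def
  -- bound |k - t|
  have hk' : |k - ⌊t⌋| + 1 ≤ (M₁ : ℤ) := hk
  have hkR : |(k : ℝ) - ⌊t⌋| ≤ (M₁ : ℝ) - 1 := by
    have h2 : |k - ⌊t⌋| ≤ (M₁ : ℤ) - 1 := by linarith [hk']
    exact_mod_cast h2
  have hfl1 : |(⌊t⌋ : ℝ) - t| ≤ 1 := by
    rw [abs_le]
    constructor <;> linarith [Int.floor_le t, Int.lt_floor_add_one t]
  have hkt : |(k : ℝ) - t| ≤ (M₁ : ℝ) := by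
    calc |(k : ℝ) - t| ≤ |(k : ℝ) - ⌊t⌋| + |(⌊t⌋ : ℝ) - t| := by
          have := abs_sub_le ((k:ℝ)) ((⌊t⌋:ℝ)) t
          linarith
      _ ≤ (M₁ : ℝ) := by linarith
  have hsq : (t - (k : ℝ)) ^ 2 ≤ (M₁ : ℝ) ^ 2 := by
    have h1 : |t - (k : ℝ)| ≤ (M₁ : ℝ) := by rwa [abs_sub_comm] at hkt
    nlinarith [abs_nonneg (t - (k:ℝ)), sq_abs (t - (k:ℝ))]
  rw [vpt, vpt, hk1, dist_v2, dist_v2, ← hh_def] at hle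
  have hA : (0:ℝ) ≤ (t - (n : ℝ)) ^ 2 + (-H - h) ^ 2 := by positivity
  have hB : (0:ℝ) ≤ (t - (k : ℝ)) ^ 2 + (-H - 1/1) ^ 2 := by positivity
  have hAB : (t - (n : ℝ)) ^ 2 + (-H - h) ^ 2 ≤ (t - (k : ℝ)) ^ 2 + (-H - 1/1) ^ 2 := by
    have h1 := Real.sq_sqrt hA
    have h2 := Real.sq_sqrt hB
    nlinarith [Real.sqrt_nonneg ((t - (n : ℝ)) ^ 2 + (-H - h) ^ 2),
      Real.sqrt_nonneg ((t - (k : ℝ)) ^ 2 + (-H - 1/1) ^ 2)]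
  have hM : (0:ℝ) ≤ (M₁ : ℝ) := Nat.cast_nonneg _
  have hHsq : H = ((M₁ : ℝ) + 1) ^ 2 := hH_def
  nlinarith [sq_nonneg (t - (n:ℝ)), sq_nonneg ((M₁:ℝ)+1)]
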